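/- The minimum Hamming distance of the cycle code of a graph N equals the girth of N (the length of a shortest cycle in N), provided N contains at least one cycle. -/

import Mathlib

open Finset

private lemma zmod2_natCast_eq_zero_iff_even (m : ℕ) : (m : ZMod 2) = 0 ↔ Even m := by
  rw [ZMod.natCast_eq_zero_iff, Nat.even_iff, Nat.dvd_iff_mod_eq_zero]

/-- A finite graph with an edge in which every vertex has even degree contains a cycle. -/
private lemma exists_cycle_of_even_degree {V : Type*} [Fintype V] [DecidableEq V]
    (H : SimpleGraph V) [DecidableRel H.Adj]
    (hedge : ∃ a b, H.Adj a b) (heven : ∀ v, Even (H.degree v)) :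
    ∃ (u : V) (c : H.Walk u u), c.IsCycle := by
  classical
  obtain ⟨a, b, hab⟩ := hedge
  have h1card : 1 ≤ Fintype.card V := Fintype.card_pos_iff.mpr ⟨a⟩
  set P : ℕ → Prop := fun n => ∃ (u v : V) (p : H.Walk u v), p.IsPath ∧ p.length = n with hP
  have hP1 : P 1 := ⟨a, b, SimpleGraph.Walk.cons hab SimpleGraph.Walk.nil, by simp [hab.ne], by simp⟩
  set n := Nat.findGreatest P (Fintype.card V) with hn
  have hn1 : 1 ≤ n := Nat.le_findGreatest h1card hP1
  obtain ⟨u, v, p, hp, hlen⟩ : P n := Nat.findGreatest_spec h1card hP1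
  have hmax : ∀ (s t : V) (q : H.Walk s t), q.IsPath → q.length ≤ n := by
    intro s t q hq
    by_contra hgt
    exact Nat.findGreatest_is_greatest (lt_of_not_ge hgt)
      (le_of_lt hq.length_lt) ⟨s, t, q, hq, rfl⟩
  cases p with
  | nil => simp at hlen; omega
  | @cons _ b' _ hub q =>
    rw [SimpleGraph.Walk.cons_isPath_iff] at hp
    obtain ⟨hq, hunotin⟩ := hp
    have hb' : b' ∈ H.neighborFinset u := by simp [hub]
    have hdeg2 : 1 < H.degree u := by
      have h1 : 0 < H.degree u := card_pos.mpr ⟨b', hb'⟩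
      obtain ⟨k, hk⟩ := heven u
      omega
    obtain ⟨w, hwmem, hwb⟩ :=
      Finset.exists_mem_ne (by rwa [SimpleGraph.degree] at hdeg2) b'
    have huw : H.Adj u w := by simpa using hwmem
    by_cases hws : w ∈ q.support
    · set r := q.takeUntil w hws with hr
      have hrpath : r.IsPath := hq.takeUntil hws
      have hrsup : u ∉ r.support := fun hu => hunotin (q.support_takeUntil_subset hws hu)
      refine ⟨w, SimpleGraph.Walk.cons huw.symm (SimpleGraph.Walk.cons hub r), ?_⟩
      rw [SimpleGraph.Walk.cons_isCycle_iff]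
      constructor
      · rw [SimpleGraph.Walk.cons_isPath_iff]; exact ⟨hrpath, hrsup⟩
      · intro hmem
        rw [SimpleGraph.Walk.edges_cons, List.mem_cons] at hmem
        rcases hmem with hmem | hmem
        · rw [Sym2.eq_iff] at hmem
          rcases hmem with ⟨h1, h2⟩ | ⟨h1, h2⟩
          · exact huw.ne h1.symm
          · exact hwb h1
        · exact hrsup (r.snd_mem_support_of_mem_edges hmem)
    · exfalso
      have hwp : w ∉ (SimpleGraph.Walk.cons hub q).support := by
        rw [SimpleGraph.Walk.support_cons, List.mem_cons]
        rintro (rfl | hmem)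
        · exact huw.ne rfl
        · exact hws hmem
      have hext : (SimpleGraph.Walk.cons huw.symm (SimpleGraph.Walk.cons hub q)).IsPath := by
        rw [SimpleGraph.Walk.cons_isPath_iff]
        exact ⟨by rw [SimpleGraph.Walk.cons_isPath_iff]; exact ⟨hq, hunotin⟩, hwp⟩
      have := hmax _ _ _ hext
      simp only [SimpleGraph.Walk.length_cons] at this hlen
      omega

/-- The minimum Hamming distance of the cycle code of a graph `N`
equals the girth of `N`, provided `N` contains at least one cycle.

Codewords of the cycle code are the binary vectors indexed by `Sym2 V`,
supported on the edges of `N`, meeting every vertex in an even number of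
support edges (sum of incident values is `0` in `GF(2)`).  The Hamming weight
is the size of the support; the set of weights of nonzero codewords is compared
(in `ℕ∞`) with `G.girth`. -/
theorem minDistance_cycleCode_eq_girth {V : Type*} [Fintype V] [DecidableEq V]
    (G : SimpleGraph V) [DecidableRel G.Adj] (h : ¬ G.IsAcyclic) :
    sInf {w : ℕ∞ | ∃ x : Sym2 V → ZMod 2,
        (∀ e, x e ≠ 0 → e ∈ G.edgeSet) ∧
        (∀ v, ∑ e ∈ G.incidenceFinset v, x e = 0) ∧
        x ≠ 0 ∧
        w = ((Finset.univ.filter (fun e => x e ≠ 0)).card : ℕ∞)}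
      = G.girth := by
  classical
  have hcoe : ((G.girth : ℕ∞)) = G.egirth :=
    ENat.coe_toNat (by rwa [Ne, SimpleGraph.egirth_eq_top])
  rw [hcoe]
  apply le_antisymm
  · -- sInf ≤ egirth : exhibit the indicator vector of a shortest cycle
    obtain ⟨a, c, hc, hgl⟩ := SimpleGraph.exists_egirth_eq_length.mpr h
    apply sInf_le
    refine ⟨fun e => if e ∈ c.edges then 1 else 0, ?_, ?_, ?_, ?_⟩
    · intro e he
      by_cases hmem : e ∈ c.edges
      · exact c.edges_subset_edgeSet hmem
      · simp [hmem] at he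
    · intro v
      rw [Finset.sum_boole]
      have hset : (G.incidenceFinset v).filter (fun e => e ∈ c.edges)
          = c.edges.toFinset.filter (fun e => v ∈ e) := by
        ext e
        simp only [Finset.mem_filter, SimpleGraph.mem_incidenceFinset, List.mem_toFinset,
          SimpleGraph.incidenceSet, Set.mem_sep_iff, Set.mem_setOf_eq]
        constructor
        · rintro ⟨⟨_, hv⟩, he⟩; exact ⟨he, hv⟩
        · rintro ⟨he, hv⟩; exact ⟨⟨c.edges_subset_edgeSet he, hv⟩, he⟩
      rw [hset]
      have hnodup : c.edges.Nodup := hc.isTrail.edges_nodup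
      have hcard : (c.edges.toFinset.filter (fun e => v ∈ e)).card
          = c.edges.countP (fun e => v ∈ e) := by
        have h1 : (c.edges.filter (fun e => decide (v ∈ e))).toFinset
            = c.edges.toFinset.filter (fun e => v ∈ e) := by
          ext e; simp [List.mem_filter]
        rw [← h1, List.toFinset_card_of_nodup (hnodup.filter _), List.countP_eq_length_filter]
      rw [hcard, zmod2_natCast_eq_zero_iff_even]
      exact (hc.isTrail.even_countP_edges_iff v).mpr (by simp)
    · intro h0
      have h3 : 3 ≤ c.length := hc.three_le_length
      have hne : c.edges ≠ [] := by
        intro hnil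
        have := c.length_edges
        rw [hnil] at this
        simp at this
        omega
      obtain ⟨e, he⟩ := List.exists_mem_of_ne_nil _ hne
      have := congrFun h0 e
      simp [he] at this
    · rw [hgl]
      congr 1
      have : (Finset.univ.filter (fun e => (if e ∈ c.edges then (1 : ZMod 2) else 0) ≠ 0))
          = c.edges.toFinset := by
        ext e
        by_cases he : e ∈ c.edges <;> simp [he]
      rw [this, List.toFinset_card_of_nodup hc.isTrail.edges_nodup, c.length_edges]
  · -- egirth ≤ sInf : every nonzero codeword supports a cycle
    apply le_sInf
    rintro w ⟨x, hsupp, hsum, hx0, rfl⟩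
    -- the support graph H
    set H : SimpleGraph V :=
      { Adj := fun a b => a ≠ b ∧ x s(a, b) ≠ 0,
        symm := by
          refine ⟨?_⟩; rintro a b ⟨h1, h2⟩
          exact ⟨h1.symm, by rwa [Sym2.eq_swap]⟩,
        loopless := ⟨fun a ha => ha.1 rfl⟩ } with hH
    haveI : DecidableRel H.Adj := fun a b => Classical.dec _
    have hHG : H ≤ G := by
      rintro a b ⟨h1, h2⟩
      exact (G.mem_edgeSet).mp (hsupp _ h2)
    have hHedge : ∀ e, e ∈ H.edgeSet ↔ x e ≠ 0 := by
      intro e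
      induction e using Sym2.ind with
      | _ a b =>
        rw [SimpleGraph.mem_edgeSet]
        constructor
        · rintro ⟨_, h2⟩; exact h2
        · intro hx
          exact ⟨(G.mem_edgeSet.mp (hsupp _ hx)).ne, hx⟩
    -- even degrees in H
    have heven : ∀ v, Even (H.degree v) := by
      intro v
      have hkey : H.incidenceFinset v = (G.incidenceFinset v).filter (fun e => x e ≠ 0) := by
        ext e
        simp only [Finset.mem_filter, SimpleGraph.mem_incidenceFinset,
          SimpleGraph.incidenceSet, Set.mem_sep_iff]
        constructor
        · rintro ⟨he, hv⟩
          have hx := (hHedge e).mp he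
          exact ⟨⟨hsupp e hx, hv⟩, hx⟩
        · rintro ⟨⟨_, hv⟩, hx⟩
          exact ⟨(hHedge e).mpr hx, hv⟩
      have hone : ∀ a : ZMod 2, a ≠ 0 → a = 1 := by decide
      have hsum2 : ((((G.incidenceFinset v).filter (fun e => x e ≠ 0)).card : ℕ) : ZMod 2) = 0 := by
        calc ((((G.incidenceFinset v).filter (fun e => x e ≠ 0)).card : ℕ) : ZMod 2)
            = ∑ e ∈ (G.incidenceFinset v).filter (fun e => x e ≠ 0), x e := by
              rw [Finset.card_eq_sum_ones, Nat.cast_sum]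
              exact Finset.sum_congr rfl fun e he =>
                by rw [Nat.cast_one, hone _ (Finset.mem_filter.mp he).2]
          _ = ∑ e ∈ G.incidenceFinset v, x e := Finset.sum_filter_ne_zero _
          _ = 0 := hsum v
      rw [← H.card_incidenceFinset_eq_degree, hkey]
      rwa [zmod2_natCast_eq_zero_iff_even] at hsum2
    -- H has an edge
    have hedge : ∃ a b, H.Adj a b := by
      have : ∃ e, x e ≠ 0 := by
        by_contra hall
        push_neg at hall
        exact hx0 (funext hall)
      obtain ⟨e, he⟩ := this
      induction e using Sym2.ind with
      | _ a b =>
        exact ⟨a, b, (G.mem_edgeSet.mp (hsupp _ he)).ne, he⟩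
    obtain ⟨u, c, hc⟩ := exists_cycle_of_even_degree H hedge heven
    -- map the cycle to G to bound egirth
    have h1 : G.egirth ≤ (c.mapLe hHG).length := by
      rw [SimpleGraph.egirth]
      exact iInf_le_of_le u (iInf_le_of_le (c.mapLe hHG) (iInf_le _ (hc.mapLe hHG)))
    have hlen : (c.mapLe hHG).length = c.length := by simp
    have h2 : c.length ≤ (Finset.univ.filter (fun e => x e ≠ 0)).card := by
      have hsub : c.edges.toFinset ⊆ Finset.univ.filter (fun e => x e ≠ 0) := by
        intro e he
        rw [Finset.mem_filter]
        exact ⟨Finset.mem_univ _, (hHedge e).mp (c.edges_subset_edgeSet (List.mem_toFinset.mp he))⟩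
      calc c.length = c.edges.length := c.length_edges.symm
        _ = c.edges.toFinset.card := (List.toFinset_card_of_nodup hc.isTrail.edges_nodup).symm
        _ ≤ _ := Finset.card_le_card hsub
    calc G.egirth ≤ ((c.mapLe hHG).length : ℕ∞) := h1
      _ = (c.length : ℕ∞) := by rw [hlen]
      _ ≤ _ := Nat.cast_le.mpr h2
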